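/- Let D be a double chain with chains U and L, and let P₁ and P₂ be polygonizations of D. If P₁ and P₂ have the same set of edges with both endpoints in U and the same set of edges with both endpoints in L, then P₁ = P₂ (a polygonization of a double chain is uniquely determined by its non-alternating edges). -/
import Mathlib


open scoped Real

noncomputable section

/-- Two closed straight-line segments (edges) `[a,b]` and `[c,d]` cross if they share
a point that is not a common endpoint of the two edges. -/
def EdgesCross (a b c d : ℝ × ℝ) : Prop :=
  ∃ x : ℝ × ℝ, x ∈ segment ℝ a b ∧ x ∈ segment ℝ c d ∧
    ¬((x = a ∨ x = b) ∧ (x = c ∨ x = d))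

/-- A geometric graph (a simple graph drawn with straight segments on the point set `S`)
is non-crossing if no two distinct edges cross. -/
def NonCrossing {S : Finset (ℝ × ℝ)} (G : SimpleGraph ↥S) : Prop :=
  ∀ a b c d : ↥S, G.Adj a b → G.Adj c d → s(a, b) ≠ s(c, d) →
    ¬ EdgesCross a.1 b.1 c.1 d.1

/-- The degree of the point `p` in the geometric graph `G` on `S` (it is `0` if `p ∉ S`). -/
def degAt {S : Finset (ℝ × ℝ)} (G : SimpleGraph ↥S) (p : ℝ × ℝ) : ℕ :=
  Set.ncard {q : ↥S | ∃ hp : p ∈ S, G.Adj ⟨p, hp⟩ q}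

/-- A non-crossing path partition (ncp partition) of `S`: a non-crossing geometric graph on `S`
each of whose connected components is a path (equivalently, it is acyclic and every vertex has
degree at most 2); isolated vertices (singletons, paths of length 0) are allowed. -/
def IsNcp {S : Finset (ℝ × ℝ)} (G : SimpleGraph ↥S) : Prop :=
  NonCrossing G ∧ G.IsAcyclic ∧ ∀ v : ↥S, degAt G v.1 ≤ 2

/-- A non-crossing path partition without singletons (ncpws partition):
an ncp partition where every vertex has degree at least 1. -/
def IsNcpws {S : Finset (ℝ × ℝ)} (G : SimpleGraph ↥S) : Prop :=
  IsNcp G ∧ ∀ v : ↥S, 1 ≤ degAt G v.1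

/-- Number of ncp partitions of `S`. -/
def ncpCount (S : Finset (ℝ × ℝ)) : ℕ := Nat.card {G : SimpleGraph ↥S // IsNcp G}

/-- Number of ncpws partitions of `S`. -/
def ncpwsCount (S : Finset (ℝ × ℝ)) : ℕ := Nat.card {G : SimpleGraph ↥S // IsNcpws G}

/-- `S` is in convex position: no point of `S` lies in the convex hull of the others. -/
def ConvexPosition (S : Finset (ℝ × ℝ)) : Prop :=
  ∀ p ∈ S, p ∉ convexHull ℝ ((S : Set (ℝ × ℝ)) \ {p})

/-- The vertex `p_{k+1}` of the regular `n`-gon (labeled clockwise). -/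
def pPt (n k : ℕ) : ℝ × ℝ :=
  (Real.cos (2 * π * k / n), - Real.sin (2 * π * k / n))

/-- The vertex set of the regular `n`-gon. -/
def Pgon (n : ℕ) : Finset (ℝ × ℝ) := (Finset.range n).image (pPt n)

/-- `g n`: number of ncp partitions of the vertex set of the regular `n`-gon (`g 0 = 1`). -/
def gCount (n : ℕ) : ℕ := ncpCount (Pgon n)

/-- `f n`: number of ncp partitions of the regular `n`-gon where the fixed vertex `p₁`
has degree exactly 1 (`f 0 = 0`). -/
def fCount (n : ℕ) : ℕ :=
  Nat.card {G : SimpleGraph ↥(Pgon n) // IsNcp G ∧ degAt G (pPt n 0) = 1}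

/-- `h n`: number of ncp partitions of the regular `n`-gon where the fixed vertex `p₁`
has degree exactly 2 (`h 0 = 0`). -/
def hCount (n : ℕ) : ℕ :=
  Nat.card {G : SimpleGraph ↥(Pgon n) // IsNcp G ∧ degAt G (pPt n 0) = 2}

/-- `gs n`: number of ncpws partitions of the regular `n`-gon (`gs 0 = 1`). -/
def gsCount (n : ℕ) : ℕ := ncpwsCount (Pgon n)

/-- `fs n`: number of ncpws partitions of the regular `n`-gon where `p₁` has degree 1. -/
def fsCount (n : ℕ) : ℕ :=
  Nat.card {G : SimpleGraph ↥(Pgon n) // IsNcpws G ∧ degAt G (pPt n 0) = 1}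

/-- `hs n`: number of ncpws partitions of the regular `n`-gon where `p₁` has degree 2. -/
def hsCount (n : ℕ) : ℕ :=
  Nat.card {G : SimpleGraph ↥(Pgon n) // IsNcpws G ∧ degAt G (pPt n 0) = 2}

/-- The ordering condition for an ncp partition w.r.t. the clockwise labeling `σ`:
whenever `σ i` and `σ k` (`i < k`) are the two degree-1 endpoints of a path component of
positive length, no vertex `σ j` with `i < j < k` is an endpoint (i.e. has degree ≤ 1). -/
def OrderedCond {n : ℕ} {S : Finset (ℝ × ℝ)} (σ : Fin n → ℝ × ℝ)
    (G : SimpleGraph ↥S) : Prop :=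
  ∀ i j k : Fin n, i < j → j < k →
    ∀ (hi : σ i ∈ S) (hk : σ k ∈ S),
      degAt G (σ i) = 1 → degAt G (σ k) = 1 →
      G.Reachable ⟨σ i, hi⟩ ⟨σ k, hk⟩ → ¬ degAt G (σ j) ≤ 1

/-- `go n`: number of ordered ncp partitions of the regular `n`-gon (`go 0 = 1`). -/
def goCount (n : ℕ) : ℕ :=
  Nat.card {G : SimpleGraph ↥(Pgon n) //
    IsNcp G ∧ OrderedCond (fun i : Fin n => pPt n i) G}

/-- `fo n`: number of ordered ncp partitions of the regular `n`-gon where `p₁` has degree 1. -/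
def foCount (n : ℕ) : ℕ :=
  Nat.card {G : SimpleGraph ↥(Pgon n) //
    IsNcp G ∧ OrderedCond (fun i : Fin n => pPt n i) G ∧ degAt G (pPt n 0) = 1}

/-- `ho n`: number of ordered ncp partitions of the regular `n`-gon where `p₁` has degree 2. -/
def hoCount (n : ℕ) : ℕ :=
  Nat.card {G : SimpleGraph ↥(Pgon n) //
    IsNcp G ∧ OrderedCond (fun i : Fin n => pPt n i) G ∧ degAt G (pPt n 0) = 2}

/-- The orientation determinant of the triple `(p, q, r)`. -/
def orientDet (p q r : ℝ × ℝ) : ℝ :=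
  (q.1 - p.1) * (r.2 - p.2) - (q.2 - p.2) * (r.1 - p.1)

/-- `σ` lists the points of `S` as `p₁, …, pₙ` in clockwise order around their convex hull. -/
def IsClockwiseLabeling {n : ℕ} (S : Finset (ℝ × ℝ)) (σ : Fin n → ℝ × ℝ) : Prop :=
  Function.Injective σ ∧ Set.range σ = (S : Set (ℝ × ℝ)) ∧
    ∀ i j k : Fin n, i < j → j < k → orientDet (σ i) (σ j) (σ k) < 0

/-- `p` lies strictly below the line through `q` and `r` (intended for `q.1 < r.1`):
`det [[r₁−q₁, r₂−q₂], [p₁−q₁, p₂−q₂]] < 0`. -/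
def StrictlyBelow (p q r : ℝ × ℝ) : Prop :=
  (r.1 - q.1) * (p.2 - q.2) - (r.2 - q.2) * (p.1 - q.1) < 0

/-- `p` lies strictly above the line through `q` and `r` (intended for `q.1 < r.1`). -/
def StrictlyAbove (p q r : ℝ × ℝ) : Prop :=
  0 < (r.1 - q.1) * (p.2 - q.2) - (r.2 - q.2) * (p.1 - q.1)

/-- A double chain with chains `U` and `L` (the point set is `U ∪ L`). -/
structure IsDoubleChain (U L : Finset (ℝ × ℝ)) : Prop where
  disj : Disjoint U L
  distinct_x : ∀ p ∈ U ∪ L, ∀ q ∈ U ∪ L, p ≠ q → p.1 ≠ q.1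
  concaveU : ∀ a ∈ U, ∀ b ∈ U, ∀ c ∈ U, a.1 < b.1 → b.1 < c.1 → StrictlyBelow b a c
  convexL : ∀ a ∈ L, ∀ b ∈ L, ∀ c ∈ L, a.1 < b.1 → b.1 < c.1 → StrictlyAbove b a c
  chainL_below : ∀ q ∈ U, ∀ r ∈ U, q.1 < r.1 → ∀ p ∈ L, StrictlyBelow p q r
  chainU_above : ∀ q ∈ L, ∀ r ∈ L, q.1 < r.1 → ∀ p ∈ U, StrictlyAbove p q r

/-- A polygonization of `D`: a non-crossing geometric graph on `D` that is a
Hamiltonian cycle (connected and every vertex has degree 2). -/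
def IsPolygonization {D : Finset (ℝ × ℝ)} (G : SimpleGraph ↥D) : Prop :=
  NonCrossing G ∧ G.Connected ∧ ∀ v : ↥D, degAt G v.1 = 2

/-- Number of polygonizations of `D`. -/
def polyCount (D : Finset (ℝ × ℝ)) : ℕ := Nat.card {G : SimpleGraph ↥D // IsPolygonization G}

/-- The number of alternating edges (edges with one endpoint in `U` and the other in `L`)
of a geometric graph on the double chain `U ∪ L`. -/
def altEdgeCount (U L : Finset (ℝ × ℝ)) (G : SimpleGraph ↥(U ∪ L)) : ℕ :=
  Set.ncard {e ∈ G.edgeSet | ∃ a b : ↥(U ∪ L), e = s(a, b) ∧ a.1 ∈ U ∧ b.1 ∈ L}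

/-- The geometric graph on `S` formed by the edges of `G` with both endpoints in `S ⊆ T`. -/
def restrictGraph {S T : Finset (ℝ × ℝ)} (h : S ⊆ T) (G : SimpleGraph ↥T) :
    SimpleGraph ↥S :=
  SimpleGraph.comap (fun x : ↥S => (⟨x.1, h x.2⟩ : ↥T)) G

end

section Aux

private lemma od_affine (p q c d : ℝ × ℝ) (t : ℝ) :
    orientDet p q ((1 - t) • c + t • d) =
      (1 - t) * orientDet p q c + t * orientDet p q d := by
  simp only [orientDet, Prod.fst_add, Prod.snd_add, Prod.smul_fst, Prod.smul_snd,
    smul_eq_mul]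
  ring

private lemma cross_of_signs (a b c d : ℝ × ℝ) (hab : a.1 ≠ b.1)
    (h1 : 0 < orientDet a b c) (h2 : orientDet a b d < 0)
    (h3 : orientDet c d a < 0) (h4 : 0 < orientDet c d b) :
    EdgesCross a b c d := by
  have hden : (0:ℝ) < orientDet a b c - orientDet a b d := by linarith
  set t : ℝ := orientDet a b c / (orientDet a b c - orientDet a b d) with htdef
  have ht0 : 0 < t := div_pos h1 hden
  have ht1 : t < 1 := (div_lt_one hden).2 (by linarith)
  set x : ℝ × ℝ := (1 - t) • c + t • d with hxdef
  have hxcd : x ∈ segment ℝ c d := ⟨1 - t, t, by linarith, ht0.le, by ring, rfl⟩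
  have habx : orientDet a b x = 0 := by
    rw [hxdef, od_affine, htdef]
    field_simp
    ring
  have hgx : orientDet c d x = 0 := by
    rw [hxdef, od_affine]
    have e1 : orientDet c d c = 0 := by simp only [orientDet]; ring
    have e2 : orientDet c d d = 0 := by simp only [orientDet]; ring
    rw [e1, e2]; ring
  have hba : b.1 - a.1 ≠ 0 := sub_ne_zero.2 (Ne.symm hab)
  set s : ℝ := (x.1 - a.1) / (b.1 - a.1) with hsdef
  have hxs : x = (1 - s) • a + s • b := by
    have h2' : (b.1 - a.1) * (x.2 - a.2) - (b.2 - a.2) * (x.1 - a.1) = 0 := by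
      have : orientDet a b x = (b.1 - a.1) * (x.2 - a.2) - (b.2 - a.2) * (x.1 - a.1) := by
        simp [orientDet]
      linarith [habx, this.symm.trans habx]
    have hco1 : ((1 - s) • a + s • b).1 = (1 - s) * a.1 + s * b.1 := by
      simp [Prod.fst_add, Prod.smul_fst]
    have hco2 : ((1 - s) • a + s • b).2 = (1 - s) * a.2 + s * b.2 := by
      simp [Prod.snd_add, Prod.smul_snd]
    have hx1 : x.1 = (1 - s) * a.1 + s * b.1 := by
      rw [hsdef]; field_simp; ring
    have hx2 : x.2 = (1 - s) * a.2 + s * b.2 := by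
      rw [hsdef]; field_simp
      nlinarith [h2']
    exact Prod.ext (by rw [hco1, hx1]) (by rw [hco2, hx2])
  have hgxs : (1 - s) * orientDet c d a + s * orientDet c d b = 0 := by
    rw [← od_affine, ← hxs, hgx]
  have hs0 : 0 < s := by nlinarith
  have hs1 : s < 1 := by nlinarith
  have hxab : x ∈ segment ℝ a b := ⟨1 - s, s, by linarith, hs0.le, by ring, hxs.symm⟩
  refine ⟨x, hxab, hxcd, ?_⟩
  rintro ⟨h | h, -⟩
  · rw [h] at hgx; exact absurd hgx (ne_of_lt h3)
  · rw [h] at hgx; exact absurd hgx (ne_of_gt h4)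

end Aux
/-- a polygonization of a double chain is uniquely determined by its
non-alternating edges (the edges with both endpoints in `U` and those with both
endpoints in `L`). -/
theorem double_chain_polygonization_determined_by_nonalternating
    (U L : Finset (ℝ × ℝ)) (hDC : IsDoubleChain U L)
    (P₁ P₂ : SimpleGraph ↥(U ∪ L))
    (h₁ : IsPolygonization P₁) (h₂ : IsPolygonization P₂)
    (hU : restrictGraph (Finset.subset_union_left (s₂ := L)) P₁ =
          restrictGraph Finset.subset_union_left P₂)
    (hL : restrictGraph (Finset.subset_union_right (s₁ := U)) P₁ =
          restrictGraph Finset.subset_union_right P₂) :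
    P₁ = P₂ := by
  classical
  obtain ⟨hnc₁, -, hdeg₁⟩ := h₁
  obtain ⟨hnc₂, -, hdeg₂⟩ := h₂
  -- edges within U agree
  have hadjU : ∀ v w : ↥(U ∪ L), v.1 ∈ U → w.1 ∈ U → (P₁.Adj v w ↔ P₂.Adj v w) := by
    intro v w hv hw
    have h := congrFun (congrFun (congrArg SimpleGraph.Adj hU)
      (⟨v.1, hv⟩ : ↥U)) (⟨w.1, hw⟩ : ↥U)
    simp only [restrictGraph, SimpleGraph.comap_adj, Subtype.coe_eta] at h
    exact iff_of_eq h
  have hadjL : ∀ v w : ↥(U ∪ L), v.1 ∈ L → w.1 ∈ L → (P₁.Adj v w ↔ P₂.Adj v w) := by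
    intro v w hv hw
    have h := congrFun (congrFun (congrArg SimpleGraph.Adj hL)
      (⟨v.1, hv⟩ : ↥L)) (⟨w.1, hw⟩ : ↥L)
    simp only [restrictGraph, SimpleGraph.comap_adj, Subtype.coe_eta] at h
    exact iff_of_eq h
  -- degree decomposition
  have hdecomp : ∀ (G : SimpleGraph ↥(U ∪ L)), (∀ v : ↥(U ∪ L), degAt G v.1 = 2) →
      ∀ v : ↥(U ∪ L),
        Set.ncard {q : ↥(U ∪ L) | G.Adj v q ∧ q.1 ∈ U} +
        Set.ncard {q : ↥(U ∪ L) | G.Adj v q ∧ q.1 ∈ L} = 2 := by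
    intro G hdeg v
    have h1 : {q : ↥(U ∪ L) | ∃ hp : v.1 ∈ U ∪ L, G.Adj ⟨v.1, hp⟩ q} =
        {q : ↥(U ∪ L) | G.Adj v q ∧ q.1 ∈ U} ∪ {q : ↥(U ∪ L) | G.Adj v q ∧ q.1 ∈ L} := by
      ext q
      simp only [Set.mem_setOf_eq, Set.mem_union]
      constructor
      · rintro ⟨hp, h⟩
        rw [Subtype.coe_eta] at h
        rcases Finset.mem_union.mp q.2 with h' | h'
        · exact Or.inl ⟨h, h'⟩
        · exact Or.inr ⟨h, h'⟩
      · rintro (⟨h, -⟩ | ⟨h, -⟩) <;> exact ⟨v.2, by rwa [Subtype.coe_eta]⟩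
    have hdisj : Disjoint {q : ↥(U ∪ L) | G.Adj v q ∧ q.1 ∈ U}
        {q : ↥(U ∪ L) | G.Adj v q ∧ q.1 ∈ L} := by
      rw [Set.disjoint_left]
      rintro q ⟨-, hqU⟩ ⟨-, hqL⟩
      exact (Finset.disjoint_left.mp hDC.disj hqU) hqL
    have hd := hdeg v
    unfold degAt at hd
    rw [h1, Set.ncard_union_eq hdisj (Set.toFinite _) (Set.toFinite _)] at hd
    exact hd
  -- alternating edges agree
  have halt : ∀ v w : ↥(U ∪ L), v.1 ∈ U → w.1 ∈ L → (P₁.Adj v w ↔ P₂.Adj v w) := by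
    by_contra hcon
    push_neg at hcon
    set Δ : Set (↥(U ∪ L) × ↥(U ∪ L)) :=
      {p | p.1.1 ∈ U ∧ p.2.1 ∈ L ∧ ¬(P₁.Adj p.1 p.2 ↔ P₂.Adj p.1 p.2)} with hΔdef
    have hΔfin : Δ.Finite := Set.toFinite Δ
    obtain ⟨v, w, hv, hw, hne⟩ := hcon
    have hΔne : hΔfin.toFinset.Nonempty := by
      refine ⟨(v, w), ?_⟩
      rw [Set.Finite.mem_toFinset]
      exact ⟨hv, hw, by tauto⟩
    obtain ⟨p, hpΔ, hpmin⟩ := Finset.exists_min_image hΔfin.toFinset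
      (fun q => q.1.1.1) hΔne
    obtain ⟨r, hrΔ', hrmin⟩ := Finset.exists_min_image
      (hΔfin.toFinset.filter (fun q => q.1 = p.1)) (fun q => q.2.1.1)
      ⟨p, Finset.mem_filter.mpr ⟨hpΔ, rfl⟩⟩
    obtain ⟨hrΔ, hrp⟩ := Finset.mem_filter.mp hrΔ'
    set u : ↥(U ∪ L) := r.1 with hudef
    set l : ↥(U ∪ L) := r.2 with hldef
    have hrmem : u.1 ∈ U ∧ l.1 ∈ L ∧ ¬(P₁.Adj u l ↔ P₂.Adj u l) :=
      (Set.Finite.mem_toFinset hΔfin).mp hrΔ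
    obtain ⟨hru, hrl, hriff⟩ := hrmem
    have hmin1 : ∀ q ∈ Δ, u.1.1 ≤ q.1.1.1 := by
      intro q hq
      have := hpmin q ((Set.Finite.mem_toFinset hΔfin).mpr hq)
      rw [hrp]; exact this
    have hmin2 : ∀ q ∈ Δ, q.1 = u → l.1.1 ≤ q.2.1.1 := by
      intro q hq hq1
      exact hrmin q (Finset.mem_filter.mpr
        ⟨(Set.Finite.mem_toFinset hΔfin).mpr hq, by rw [hq1, hrp]⟩)
    -- symmetric key lemma
    have key : ∀ Q₁ Q₂ : SimpleGraph ↥(U ∪ L), NonCrossing Q₂ →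
        (∀ a b : ↥(U ∪ L), a.1 ∈ U → b.1 ∈ L →
          ¬(Q₁.Adj a b ↔ Q₂.Adj a b) → (a, b) ∈ Δ) →
        Set.ncard {q : ↥(U ∪ L) | Q₁.Adj u q ∧ q.1 ∈ L} =
          Set.ncard {q : ↥(U ∪ L) | Q₂.Adj u q ∧ q.1 ∈ L} →
        Set.ncard {q : ↥(U ∪ L) | Q₁.Adj l q ∧ q.1 ∈ U} =
          Set.ncard {q : ↥(U ∪ L) | Q₂.Adj l q ∧ q.1 ∈ U} →
        Q₁.Adj u l → ¬Q₂.Adj u l → False := by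
      intro Q₁ Q₂ hnc hmem hcardL hcardU hadj hnadj
      -- find l''
      have hsubL : ¬ ({q : ↥(U ∪ L) | Q₂.Adj u q ∧ q.1 ∈ L} ⊆
          {q : ↥(U ∪ L) | Q₁.Adj u q ∧ q.1 ∈ L}) := by
        intro hss
        have heq := Set.eq_of_subset_of_ncard_le hss (le_of_eq hcardL) (Set.toFinite _)
        have : l ∈ {q : ↥(U ∪ L) | Q₂.Adj u q ∧ q.1 ∈ L} := by
          rw [heq]; exact ⟨hadj, hrl⟩
        exact hnadj this.1
      obtain ⟨l'', hl''mem, hl''not⟩ := Set.not_subset.mp hsubL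
      obtain ⟨hadj2, hl''L⟩ := hl''mem
      have hnadj1 : ¬ Q₁.Adj u l'' := fun h => hl''not ⟨h, hl''L⟩
      have hl''Δ : (u, l'') ∈ Δ := hmem u l'' hru hl''L
        (fun hiff => hnadj1 (hiff.mpr hadj2))
      have hlne : l ≠ l'' := by rintro rfl; exact hnadj hadj2
      have hlt1 : l.1.1 < l''.1.1 := by
        refine lt_of_le_of_ne (hmin2 (u, l'') hl''Δ rfl) ?_
        exact hDC.distinct_x l.1 l.2 l''.1 l''.2 (fun h => hlne (Subtype.ext h))
      -- find u''
      have hsubU : ¬ ({q : ↥(U ∪ L) | Q₂.Adj l q ∧ q.1 ∈ U} ⊆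
          {q : ↥(U ∪ L) | Q₁.Adj l q ∧ q.1 ∈ U}) := by
        intro hss
        have heq := Set.eq_of_subset_of_ncard_le hss (le_of_eq hcardU) (Set.toFinite _)
        have : u ∈ {q : ↥(U ∪ L) | Q₂.Adj l q ∧ q.1 ∈ U} := by
          rw [heq]; exact ⟨hadj.symm, hru⟩
        exact hnadj this.1.symm
      obtain ⟨u'', hu''mem, hu''not⟩ := Set.not_subset.mp hsubU
      obtain ⟨hadj2', hu''U⟩ := hu''mem
      have hnadj1' : ¬ Q₁.Adj l u'' := fun h => hu''not ⟨h, hu''U⟩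
      have hu''Δ : (u'', l) ∈ Δ := hmem u'' l hu''U hrl
        (fun hiff => hnadj1' (hiff.mpr hadj2'.symm).symm)
      have hune : u ≠ u'' := by rintro rfl; exact hnadj hadj2'.symm
      have hlt2 : u.1.1 < u''.1.1 := by
        refine lt_of_le_of_ne (hmin1 (u'', l) hu''Δ) ?_
        exact hDC.distinct_x u.1 u.2 u''.1 u''.2 (fun h => hune (Subtype.ext h))
      -- the two Q₂-edges cross
      have hul'' : u.1 ≠ l''.1 :=
        fun h => (Finset.disjoint_left.mp hDC.disj hru) (h ▸ hl''L)
      have hnesym : s(u, l'') ≠ s(u'', l) := by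
        intro h
        rcases Sym2.eq_iff.mp h with ⟨h1, -⟩ | ⟨h1, -⟩
        · exact hune h1
        · exact (Finset.disjoint_left.mp hDC.disj hru) (by rw [h1]; exact hrl)
      have hab : u.1.1 ≠ l''.1.1 :=
        hDC.distinct_x u.1 u.2 l''.1 l''.2 hul''
      have hbelow1 : orientDet u.1 u''.1 l''.1 < 0 :=
        hDC.chainL_below u.1 hru u''.1 hu''U hlt2 l''.1 hl''L
      have hbelow2 : orientDet u.1 u''.1 l.1 < 0 :=
        hDC.chainL_below u.1 hru u''.1 hu''U hlt2 l.1 hrl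
      have habove1 : 0 < orientDet l.1 l''.1 u.1 :=
        hDC.chainU_above l.1 hrl l''.1 hl''L hlt1 u.1 hru
      have habove2 : 0 < orientDet l.1 l''.1 u''.1 :=
        hDC.chainU_above l.1 hrl l''.1 hl''L hlt1 u''.1 hu''U
      have hs1 : 0 < orientDet u.1 l''.1 u''.1 := by
        have e : orientDet u.1 l''.1 u''.1 = - orientDet u.1 u''.1 l''.1 := by
          simp only [orientDet]; ring
        rw [e]; linarith
      have hs2 : orientDet u.1 l''.1 l.1 < 0 := by
        have e : orientDet u.1 l''.1 l.1 = - orientDet l.1 l''.1 u.1 := by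
          simp only [orientDet]; ring
        rw [e]; linarith
      have hs3 : orientDet u''.1 l.1 u.1 < 0 := by
        have e : orientDet u''.1 l.1 u.1 = orientDet u.1 u''.1 l.1 := by
          simp only [orientDet]; ring
        rw [e]; exact hbelow2
      have hs4 : 0 < orientDet u''.1 l.1 l''.1 := by
        have e : orientDet u''.1 l.1 l''.1 = orientDet l.1 l''.1 u''.1 := by
          simp only [orientDet]; ring
        rw [e]; exact habove2
      exact hnc u l'' u'' l hadj2 hadj2'.symm hnesym
        (cross_of_signs u.1 l''.1 u''.1 l.1 hab hs1 hs2 hs3 hs4)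
    -- card equalities for u and l
    have hNUe : {q : ↥(U ∪ L) | P₁.Adj u q ∧ q.1 ∈ U} =
        {q : ↥(U ∪ L) | P₂.Adj u q ∧ q.1 ∈ U} := by
      ext q
      simp only [Set.mem_setOf_eq]
      exact and_congr_left fun hq => hadjU u q hru hq
    have hNLe : {q : ↥(U ∪ L) | P₁.Adj l q ∧ q.1 ∈ L} =
        {q : ↥(U ∪ L) | P₂.Adj l q ∧ q.1 ∈ L} := by
      ext q
      simp only [Set.mem_setOf_eq]
      exact and_congr_left fun hq => hadjL l q hrl hq
    have e1 := hdecomp P₁ hdeg₁ u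
    have e2 := hdecomp P₂ hdeg₂ u
    rw [hNUe] at e1
    have hcardL : Set.ncard {q : ↥(U ∪ L) | P₁.Adj u q ∧ q.1 ∈ L} =
        Set.ncard {q : ↥(U ∪ L) | P₂.Adj u q ∧ q.1 ∈ L} := by omega
    have e3 := hdecomp P₁ hdeg₁ l
    have e4 := hdecomp P₂ hdeg₂ l
    rw [hNLe] at e3
    have hcardU : Set.ncard {q : ↥(U ∪ L) | P₁.Adj l q ∧ q.1 ∈ U} =
        Set.ncard {q : ↥(U ∪ L) | P₂.Adj l q ∧ q.1 ∈ U} := by omega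
    rcases Classical.em (P₁.Adj u l) with h | h
    · have h2 : ¬ P₂.Adj u l := fun h2 => hriff (iff_of_true h h2)
      exact key P₁ P₂ hnc₂ (fun a b ha hb hn => ⟨ha, hb, hn⟩) hcardL hcardU h h2
    · have h2 : P₂.Adj u l := by
        by_contra h2
        exact hriff (iff_of_false h h2)
      exact key P₂ P₁ hnc₁ (fun a b ha hb hn => ⟨ha, hb, fun hiff => hn hiff.symm⟩)
        hcardL.symm hcardU.symm h2 h
  -- conclude
  ext v w
  rcases Finset.mem_union.mp v.2 with hv | hv <;> rcases Finset.mem_union.mp w.2 with hw | hw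
  · exact hadjU v w hv hw
  · exact halt v w hv hw
  · exact ⟨fun h => ((halt w v hw hv).mp h.symm).symm,
      fun h => ((halt w v hw hv).mpr h.symm).symm⟩
  · exact hadjL v w hv hw
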